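/- Let (x,y,f) and (x̂,ŷ,f̂) be two fractional schedules with the same total processing per job (Σ_t x̂_{jt} = Σ_t x_{jt} for all j) in which jobs are partitioned into classes C_k with p̃_j = 2^k for j ∈ C_k. Define V_{k,t}(x) = Σ_{j∈C_k} Σ_{t'≥t} x_{jt'}. If V_{k,t}(x̂) ≤ V_{k,t}(x) for all k and all t, then Σ_j f̂_j ≤ Σ_j f_j, where f_j = Σ_t (x_{jt}/p̃_j·(t + 1/2 − r_j) + x_{jt}/2). -/

import Mathlib

private lemma abel_lemma (T : ℕ) (a : ℕ → ℝ) :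
    ∑ t ∈ Finset.range (T + 1), (t : ℝ) * a t =
      ∑ s ∈ Finset.Ico 1 (T + 1), ∑ t ∈ Finset.Ico s (T + 1), a t := by
  rw [Finset.sum_Ico_Ico_comm]
  simp [Finset.sum_const, Nat.card_Ico, nsmul_eq_mul]
  rw [Finset.range_eq_Ico, Finset.sum_eq_sum_Ico_succ_bot (by omega)]
  simp

theorem stmt_13 (n T : ℕ) (cl : Fin n → ℕ) (r : Fin n → ℝ)
    (x xhat : Fin n → ℕ → ℝ)
    (hame : ∀ j, ∑ t ∈ Finset.range (T + 1), xhat j t =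
      ∑ t ∈ Finset.range (T + 1), x j t)
    (hV : ∀ k t,
      (∑ j ∈ Finset.univ.filter (fun j => cl j = k),
          ∑ t' ∈ Finset.Ico t (T + 1), xhat j t') ≤
        ∑ j ∈ Finset.univ.filter (fun j => cl j = k),
          ∑ t' ∈ Finset.Ico t (T + 1), x j t') :
    (∑ j, ∑ t ∈ Finset.range (T + 1),
        (xhat j t / (2 : ℝ) ^ (cl j) * ((t : ℝ) + 1 / 2 - r j) + xhat j t / 2)) ≤
      ∑ j, ∑ t ∈ Finset.range (T + 1),
        (x j t / (2 : ℝ) ^ (cl j) * ((t : ℝ) + 1 / 2 - r j) + x j t / 2) := by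
  have key : ∀ k,
      (∑ j ∈ Finset.univ.filter (fun j => cl j = k),
          ∑ t ∈ Finset.range (T + 1), (t : ℝ) * xhat j t) ≤
        ∑ j ∈ Finset.univ.filter (fun j => cl j = k),
          ∑ t ∈ Finset.range (T + 1), (t : ℝ) * x j t := by
    intro k
    simp only [abel_lemma]
    rw [Finset.sum_comm]
    conv_rhs => rw [Finset.sum_comm]
    exact Finset.sum_le_sum fun s _ => hV k s
  have main : (∑ j, (1 / (2 : ℝ) ^ (cl j)) * ∑ t ∈ Finset.range (T + 1), (t : ℝ) * xhat j t) ≤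
      ∑ j, (1 / (2 : ℝ) ^ (cl j)) * ∑ t ∈ Finset.range (T + 1), (t : ℝ) * x j t := by
    rw [← Finset.sum_fiberwise_of_maps_to (t := Finset.univ.image cl)
        (fun j _ => Finset.mem_image_of_mem cl (Finset.mem_univ j))
        (fun j => (1 / (2 : ℝ) ^ (cl j)) * ∑ t ∈ Finset.range (T + 1), (t : ℝ) * xhat j t),
      ← Finset.sum_fiberwise_of_maps_to (t := Finset.univ.image cl)
        (fun j _ => Finset.mem_image_of_mem cl (Finset.mem_univ j))
        (fun j => (1 / (2 : ℝ) ^ (cl j)) * ∑ t ∈ Finset.range (T + 1), (t : ℝ) * x j t)]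
    apply Finset.sum_le_sum
    intro k _
    have e1 : ∀ (z : Fin n → ℕ → ℝ),
        (∑ j ∈ Finset.univ.filter (fun j => cl j = k),
          (1 / (2 : ℝ) ^ (cl j)) * ∑ t ∈ Finset.range (T + 1), (t : ℝ) * z j t) =
        (1 / (2 : ℝ) ^ k) * ∑ j ∈ Finset.univ.filter (fun j => cl j = k),
          ∑ t ∈ Finset.range (T + 1), (t : ℝ) * z j t := by
      intro z
      rw [Finset.mul_sum]
      apply Finset.sum_congr rfl
      intro j hj
      rw [(Finset.mem_filter.mp hj).2]
    rw [e1, e1]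
    exact mul_le_mul_of_nonneg_left (key k) (by positivity)
  have expand : ∀ (z : Fin n → ℕ → ℝ) (j : Fin n),
      (∑ t ∈ Finset.range (T + 1),
        (z j t / (2 : ℝ) ^ (cl j) * ((t : ℝ) + 1 / 2 - r j) + z j t / 2)) =
      (1 / (2 : ℝ) ^ (cl j)) * (∑ t ∈ Finset.range (T + 1), (t : ℝ) * z j t) +
        ((1 / 2 - r j) / (2 : ℝ) ^ (cl j) + 1 / 2) * ∑ t ∈ Finset.range (T + 1), z j t := by
    intro z j
    rw [Finset.mul_sum, Finset.mul_sum, ← Finset.sum_add_distrib]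
    apply Finset.sum_congr rfl
    intro t _
    ring
  calc (∑ j, ∑ t ∈ Finset.range (T + 1),
        (xhat j t / (2 : ℝ) ^ (cl j) * ((t : ℝ) + 1 / 2 - r j) + xhat j t / 2))
      = ∑ j, ((1 / (2 : ℝ) ^ (cl j)) * (∑ t ∈ Finset.range (T + 1), (t : ℝ) * xhat j t) +
          ((1 / 2 - r j) / (2 : ℝ) ^ (cl j) + 1 / 2) * ∑ t ∈ Finset.range (T + 1), xhat j t) :=
        Finset.sum_congr rfl fun j _ => expand xhat j
    _ = (∑ j, (1 / (2 : ℝ) ^ (cl j)) * ∑ t ∈ Finset.range (T + 1), (t : ℝ) * xhat j t) +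
          ∑ j, ((1 / 2 - r j) / (2 : ℝ) ^ (cl j) + 1 / 2) * ∑ t ∈ Finset.range (T + 1), x j t := by
        rw [Finset.sum_add_distrib]
        congr 1
        exact Finset.sum_congr rfl fun j _ => by rw [hame j]
    _ ≤ (∑ j, (1 / (2 : ℝ) ^ (cl j)) * ∑ t ∈ Finset.range (T + 1), (t : ℝ) * x j t) +
          ∑ j, ((1 / 2 - r j) / (2 : ℝ) ^ (cl j) + 1 / 2) * ∑ t ∈ Finset.range (T + 1), x j t :=
        add_le_add_left main _
    _ = ∑ j, ∑ t ∈ Finset.range (T + 1),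
          (x j t / (2 : ℝ) ^ (cl j) * ((t : ℝ) + 1 / 2 - r j) + x j t / 2) := by
        rw [← Finset.sum_add_distrib]
        exact Finset.sum_congr rfl fun j _ => (expand x j).symm
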